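/- arXiv:2207.10076 — 2 statements merged into one kernel-verified Lean document; each statement's English description precedes it below -/
import Mathlib

section
/- Let (a_t, q_t) for t = 1,...,T be i.i.d. (or strictly stationary ergodic) with E|a_t|^r < ∞ for some r > 1, and q_t having a continuous bounded density. Then sup_{γ ∈ Γ} | T⁻¹ Σ_{t=1}^T a_t·1[q_t ≤ γ] − E[a_t·1[q_t ≤ γ]] | → 0 in probability as T → ∞, where Γ is a compact interval. -/
open MeasureTheory ProbabilityTheory Filter Topology

section Aux

variable {Ω : Type*} [MeasurableSpace Ω] {μ : Measure Ω} [IsProbabilityMeasure μ]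

/-- The sample average of `a_t 1[q_t ≤ γ]`. -/
private noncomputable def Savg (a qv : ℕ → Ω → ℝ) (γ : ℝ) (T : ℕ) (ω : Ω) : ℝ :=
  (T : ℝ)⁻¹ * ∑ t ∈ Finset.range T, (if qv t ω ≤ γ then a t ω else 0)

/-- The sample average of `|a_t| 1[s < q_t ≤ t]`. -/
private noncomputable def Ravg (a qv : ℕ → Ω → ℝ) (s t : ℚ) (T : ℕ) (ω : Ω) : ℝ :=
  (T : ℝ)⁻¹ * ∑ t' ∈ Finset.range T,
    (if (s : ℝ) < qv t' ω ∧ qv t' ω ≤ (t : ℝ) then |a t' ω| else 0)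

private noncomputable def mInt (μ : Measure Ω) (a qv : ℕ → Ω → ℝ) (γ : ℝ) : ℝ :=
  ∫ ω', (if qv 0 ω' ≤ γ then a 0 ω' else 0) ∂μ

private noncomputable def ρInt (μ : Measure Ω) (a qv : ℕ → Ω → ℝ) (s t : ℚ) : ℝ :=
  ∫ ω', (if (s : ℝ) < qv 0 ω' ∧ qv 0 ω' ≤ (t : ℝ) then |a 0 ω'| else 0) ∂μ

/-- Strong law of large numbers applied to `h (a_t, q_t)` for `h` dominated by `|x|`. -/
private lemma slln_comp (a qv : ℕ → Ω → ℝ)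
    (hmeas : ∀ t, Measurable (a t) ∧ Measurable (qv t))
    (hindep : iIndepFun
      (fun t ω => (a t ω, qv t ω)) μ)
    (hident : ∀ t, IdentDistrib (fun ω => (a t ω, qv t ω)) (fun ω => (a 0 ω, qv 0 ω)) μ μ)
    (hInt : Integrable (fun ω => |a 0 ω|) μ)
    (h : ℝ × ℝ → ℝ) (hh : Measurable h) (hb : ∀ z, |h z| ≤ |z.1|) :
    ∀ᵐ ω ∂μ, Tendsto (fun T : ℕ => (T : ℝ)⁻¹ * ∑ t ∈ Finset.range T, h (a t ω, qv t ω)) atTop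
      (𝓝 (∫ ω', h (a 0 ω', qv 0 ω') ∂μ)) := by
  have hXmeas : ∀ t, Measurable (fun ω => h (a t ω, qv t ω)) := fun t =>
    hh.comp ((hmeas t).1.prodMk (hmeas t).2)
  have hint : Integrable (fun ω => h (a 0 ω, qv 0 ω)) μ := by
    refine hInt.mono (hXmeas 0).aestronglyMeasurable (ae_of_all _ fun ω => ?_)
    simpa [Real.norm_eq_abs, abs_abs] using hb (a 0 ω, qv 0 ω)
  have hpind : Pairwise (Function.onFun (IndepFun · · μ) fun t ω => h (a t ω, qv t ω)) := by
    intro i j hij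
    exact (hindep.comp (fun _ => h) fun _ => hh).indepFun hij
  have hid : ∀ t, IdentDistrib (fun ω => h (a t ω, qv t ω)) (fun ω => h (a 0 ω, qv 0 ω)) μ μ :=
    fun t => (hident t).comp hh
  filter_upwards [strong_law_ae_real _ hint hpind hid] with ω hω
  simpa [div_eq_inv_mul] using hω

/-- Deterministic bracketing lemma: convergence at rational points plus modulus control
gives uniform convergence over `[c, d]`. -/
private lemma det_unif (S : ℝ → ℕ → ℝ) (m : ℝ → ℝ) (R : ℚ → ℚ → ℕ → ℝ) (ρ : ℚ → ℚ → ℝ)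
    (hSm : ∀ q : ℚ, Tendsto (fun T => S (q : ℝ) T) atTop (𝓝 (m (q : ℝ))))
    (hRρ : ∀ s t : ℚ, Tendsto (fun T => R s t T) atTop (𝓝 (ρ s t)))
    (hSdiff : ∀ (s t : ℚ) (γ : ℝ), (s : ℝ) ≤ γ → γ ≤ (t : ℝ) → ∀ T,
      |S γ T - S (s : ℝ) T| ≤ R s t T)
    (hmdiff : ∀ (s t : ℚ) (γ : ℝ), (s : ℝ) ≤ γ → γ ≤ (t : ℝ) → |m γ - m (s : ℝ)| ≤ ρ s t)
    (hρ : ∀ ε : ℝ, 0 < ε → ∃ h : ℚ, 0 < h ∧ ∀ s : ℚ, ρ s (s + h) < ε)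
    (c d : ℝ) :
    Tendsto (fun T => ⨆ γ : Set.Icc c d, |S (γ : ℝ) T - m (γ : ℝ)|) atTop (𝓝 0) := by
  rw [NormedAddCommGroup.tendsto_nhds_zero]
  intro ε hε
  obtain ⟨h, hh, hsmall⟩ := hρ (ε / 8) (by linarith)
  have hhR : (0 : ℝ) < (h : ℝ) := by exact_mod_cast hh
  obtain ⟨q0, hq0⟩ := exists_rat_lt c
  set N : ℕ := ⌈(d - (q0 : ℝ)) / (h : ℝ)⌉₊ with hN
  have hNd : d ≤ (q0 : ℝ) + N * (h : ℝ) := by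
    have h1 := Nat.le_ceil ((d - (q0 : ℝ)) / (h : ℝ))
    rw [div_le_iff₀ hhR] at h1
    linarith
  have E1 : ∀ i : ℕ, ∀ᶠ T in atTop,
      |S ((q0 + (i : ℚ) * h : ℚ) : ℝ) T - m ((q0 + (i : ℚ) * h : ℚ) : ℝ)| < ε / 4 := by
    intro i
    have h2 := (hSm (q0 + (i : ℚ) * h)).sub
      (tendsto_const_nhds (x := m ((q0 + (i : ℚ) * h : ℚ) : ℝ)) (f := atTop))
    rw [sub_self] at h2
    have h3 := NormedAddCommGroup.tendsto_nhds_zero.1 h2 (ε / 4) (by linarith)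
    simpa [Real.norm_eq_abs] using h3
  have E2 : ∀ i : ℕ, ∀ᶠ T in atTop, R (q0 + (i : ℚ) * h) (q0 + (i : ℚ) * h + h) T < ε / 4 :=
    fun i => (hRρ _ _).eventually_lt_const ((hsmall _).trans (by linarith))
  have Eall := (Finset.range (N + 1)).eventually_all.2 fun i _ => (E1 i).and (E2 i)
  filter_upwards [Eall] with T hT
  have hFnn : (0 : ℝ) ≤ ⨆ γ : Set.Icc c d, |S (γ : ℝ) T - m (γ : ℝ)| :=
    Real.iSup_nonneg fun γ => abs_nonneg _
  rw [Real.norm_eq_abs, abs_of_nonneg hFnn]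
  have key : ∀ γ : Set.Icc c d, |S (γ : ℝ) T - m (γ : ℝ)| ≤ 5 * ε / 8 := by
    classical
    rintro ⟨γ, hγc, hγd⟩
    set P : ℕ → Prop := fun j => (q0 : ℝ) + (j : ℝ) * (h : ℝ) < γ with hPdef
    have hP0 : P 0 := by
      simp only [P, Nat.cast_zero, zero_mul, add_zero]
      exact lt_of_lt_of_le hq0 hγc
    have hPN : ¬ P N := by
      simp only [P, not_lt]
      linarith
    set i := Nat.findGreatest P N with hidef
    have hiN : i ≤ N := Nat.findGreatest_le N
    have hPi : P i := Nat.findGreatest_spec (Nat.zero_le N) hP0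
    have hiN' : i < N := lt_of_le_of_ne hiN (fun hEq => hPN (hEq ▸ hPi))
    have hnot : ¬ P (i + 1) := Nat.findGreatest_is_greatest (Nat.lt_succ_self i) hiN'
    have hsγ : ((q0 + (i : ℚ) * h : ℚ) : ℝ) ≤ γ := by
      push_cast
      exact le_of_lt hPi
    have hγt : γ ≤ ((q0 + (i : ℚ) * h + h : ℚ) : ℝ) := by
      simp only [P, not_lt] at hnot
      push_cast
      push_cast at hnot
      linarith
    obtain ⟨h1, h2⟩ := hT i (Finset.mem_range.2 (Nat.lt_succ_of_lt hiN'))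
    have b1 := hSdiff (q0 + (i : ℚ) * h) (q0 + (i : ℚ) * h + h) γ hsγ hγt T
    have b3 := hmdiff (q0 + (i : ℚ) * h) (q0 + (i : ℚ) * h + h) γ hsγ hγt
    have hsm := hsmall (q0 + (i : ℚ) * h)
    have tri1 := abs_sub_le (S γ T) (S ((q0 + (i : ℚ) * h : ℚ) : ℝ) T) (m γ)
    have tri2 := abs_sub_le (S ((q0 + (i : ℚ) * h : ℚ) : ℝ) T)
      (m ((q0 + (i : ℚ) * h : ℚ) : ℝ)) (m γ)
    have habs : |m ((q0 + (i : ℚ) * h : ℚ) : ℝ) - m γ|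
        = |m γ - m ((q0 + (i : ℚ) * h : ℚ) : ℝ)| := abs_sub_comm _ _
    linarith
  rcases isEmpty_or_nonempty (Set.Icc c d) with he | hne
  · rw [Real.iSup_of_isEmpty]
    linarith
  · exact lt_of_le_of_lt (ciSup_le key) (by linarith)

end Aux

/-- Uniform law of large numbers for indicator-weighted averages: if `(a_t, q_t)` are
i.i.d. with `E|a_t|^r < ∞` for some `r > 1` and `q_t` has a continuous bounded density,
then `sup_{γ ∈ [c,d]} | T⁻¹ Σ_{t<T} a_t 1[q_t ≤ γ] − E[a_t 1[q_t ≤ γ]] | → 0`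
in probability. -/
theorem stmt7 {Ω : Type*} [MeasurableSpace Ω] (μ : Measure Ω) [IsProbabilityMeasure μ]
    (a qv : ℕ → Ω → ℝ) (f : ℝ → ℝ) (r : ℝ) (hr : 1 < r)
    (hmeas : ∀ t, Measurable (a t) ∧ Measurable (qv t))
    (hindep : iIndepFun
      (fun t ω => (a t ω, qv t ω)) μ)
    (hident : ∀ t, IdentDistrib (fun ω => (a t ω, qv t ω)) (fun ω => (a 0 ω, qv 0 ω)) μ μ)
    (hmom : Integrable (fun ω => |a 0 ω| ^ r) μ)
    (hcont : Continuous f) (hbdd : ∃ B : ℝ, ∀ x, f x ≤ B)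
    (hdens : ∀ s t : ℝ, s ≤ t →
      (μ {ω | s < qv 0 ω ∧ qv 0 ω ≤ t}).toReal = ∫ x in s..t, f x)
    (c d : ℝ) :
    TendstoInMeasure μ
      (fun (T : ℕ) ω => ⨆ γ : Set.Icc c d,
        |(T : ℝ)⁻¹ * ∑ t ∈ Finset.range T, (if qv t ω ≤ (γ : ℝ) then a t ω else 0)
          - ∫ ω', (if qv 0 ω' ≤ (γ : ℝ) then a 0 ω' else 0) ∂μ|)
      atTop (fun _ => (0 : ℝ)) := by
  have hm0 : Measurable (a 0) := (hmeas 0).1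
  -- integrability of |a 0|
  have hInt_abs : Integrable (fun ω => |a 0 ω|) μ := by
    refine ((integrable_const (1 : ℝ)).add hmom).mono hm0.abs.aestronglyMeasurable
      (ae_of_all _ fun ω => ?_)
    have hnn : (0 : ℝ) ≤ |a 0 ω| ^ r := Real.rpow_nonneg (abs_nonneg _) _
    rw [Real.norm_eq_abs, abs_abs, Real.norm_eq_abs]
    have habs : |1 + |a 0 ω| ^ r| = 1 + |a 0 ω| ^ r := abs_of_nonneg (by linarith)
    simp only [Pi.add_apply]
    rw [habs]
    rcases le_or_gt (|a 0 ω|) 1 with h1 | h1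
    · linarith
    · have h2 : |a 0 ω| ^ (1 : ℝ) ≤ |a 0 ω| ^ r :=
        Real.rpow_le_rpow_of_exponent_le h1.le (le_of_lt hr)
      rw [Real.rpow_one] at h2
      linarith
  have hiteMeas : ∀ γ : ℝ, Measurable (fun ω => if qv 0 ω ≤ γ then a 0 ω else 0) := fun γ =>
    Measurable.ite (measurableSet_le (hmeas 0).2 measurable_const) hm0 measurable_const
  have hIntInd : ∀ γ : ℝ, Integrable (fun ω => if qv 0 ω ≤ γ then a 0 ω else 0) μ := fun γ =>
    hInt_abs.mono (hiteMeas γ).aestronglyMeasurable (ae_of_all _ fun ω => by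
      rw [Real.norm_eq_abs, Real.norm_eq_abs, abs_abs]
      split_ifs
      · exact le_rfl
      · simp [abs_nonneg])
  have hsetMeas : ∀ s t : ℝ, MeasurableSet {ω | s < qv 0 ω ∧ qv 0 ω ≤ t} := fun s t =>
    (measurableSet_lt measurable_const (hmeas 0).2).inter
      (measurableSet_le (hmeas 0).2 measurable_const)
  have hRmeas : ∀ s t : ℝ, Measurable (fun ω => if s < qv 0 ω ∧ qv 0 ω ≤ t then |a 0 ω| else 0) :=
    fun s t => Measurable.ite (hsetMeas s t) hm0.abs measurable_const
  have hRInt : ∀ s t : ℝ, Integrable (fun ω => if s < qv 0 ω ∧ qv 0 ω ≤ t then |a 0 ω| else 0) μ :=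
    fun s t => hInt_abs.mono (hRmeas s t).aestronglyMeasurable (ae_of_all _ fun ω => by
      rw [Real.norm_eq_abs, Real.norm_eq_abs, abs_abs]
      split_ifs
      · rw [abs_abs]
      · simp [abs_nonneg])
  -- pointwise bracketing inequality
  have hptw : ∀ (s t γ x y : ℝ), s ≤ γ → γ ≤ t →
      |(if y ≤ γ then x else 0) - (if y ≤ s then x else 0)|
        ≤ (if s < y ∧ y ≤ t then |x| else 0) := by
    intro s t γ x y hsγ hγt
    split_ifs with h1 h2 h3 h3 h2 h3 h3 <;>
      simp_all [abs_nonneg, sub_self] <;> (try push_neg at *) <;> try linarith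
  have hSdiff : ∀ (ω : Ω) (s t : ℚ) (γ : ℝ), (s : ℝ) ≤ γ → γ ≤ (t : ℝ) → ∀ T,
      |Savg a qv γ T ω - Savg a qv (s : ℝ) T ω| ≤ Ravg a qv s t T ω := by
    intro ω s t γ hs ht T
    unfold Savg Ravg
    rw [← mul_sub, abs_mul, abs_inv, Nat.abs_cast, ← Finset.sum_sub_distrib]
    refine mul_le_mul_of_nonneg_left ?_ (by positivity)
    refine (Finset.abs_sum_le_sum_abs _ _).trans (Finset.sum_le_sum fun t' _ => ?_)
    exact hptw _ _ _ _ _ hs ht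
  have hmdiff : ∀ (s t : ℚ) (γ : ℝ), (s : ℝ) ≤ γ → γ ≤ (t : ℝ) →
      |mInt μ a qv γ - mInt μ a qv (s : ℝ)| ≤ ρInt μ a qv s t := by
    intro s t γ hs ht
    unfold mInt ρInt
    rw [← integral_sub (hIntInd γ) (hIntInd (s : ℝ))]
    have step1 : |∫ ω', ((if qv 0 ω' ≤ γ then a 0 ω' else 0)
        - (if qv 0 ω' ≤ (s : ℝ) then a 0 ω' else 0)) ∂μ|
        ≤ ∫ ω', |(if qv 0 ω' ≤ γ then a 0 ω' else 0)
          - (if qv 0 ω' ≤ (s : ℝ) then a 0 ω' else 0)| ∂μ := by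
      simpa [Real.norm_eq_abs] using norm_integral_le_integral_norm (μ := μ)
        (fun ω' => (if qv 0 ω' ≤ γ then a 0 ω' else 0) - (if qv 0 ω' ≤ (s : ℝ) then a 0 ω' else 0))
    refine step1.trans (integral_mono (((hIntInd γ).sub (hIntInd _)).abs) (hRInt _ _)
      (fun ω' => hptw _ _ _ _ _ hs ht))
  -- smallness of the modulus
  set K := ∫ ω', |a 0 ω'| ^ r ∂μ with hK
  have hK0 : 0 ≤ K := integral_nonneg fun ω => Real.rpow_nonneg (abs_nonneg _) _
  obtain ⟨B, hB⟩ := hbdd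
  set B' := max B 1 with hB'
  have hB'pos : (0 : ℝ) < B' := lt_of_lt_of_le one_pos (le_max_right _ _)
  have hfB' : ∀ x, f x ≤ B' := fun x => (hB x).trans (le_max_left _ _)
  have hμle : ∀ s t : ℝ, s ≤ t → (μ {ω | s < qv 0 ω ∧ qv 0 ω ≤ t}).toReal ≤ B' * (t - s) := by
    intro s t hst
    rw [hdens s t hst]
    calc ∫ x in s..t, f x ≤ ∫ _x in s..t, B' :=
          intervalIntegral.integral_mono_on hst (hcont.intervalIntegrable _ _)
            intervalIntegrable_const (fun x _ => hfB' x)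
      _ = B' * (t - s) := by rw [intervalIntegral.integral_const, smul_eq_mul]; ring
  have hIndInt : ∀ s t : ℝ,
      Integrable (fun ω => if s < qv 0 ω ∧ qv 0 ω ≤ t then (1 : ℝ) else 0) μ := by
    intro s t
    refine (integrable_const (1 : ℝ)).mono
      (Measurable.ite (hsetMeas s t) measurable_const measurable_const).aestronglyMeasurable
      (ae_of_all _ fun ω => ?_)
    split_ifs <;> simp
  have hIndVal : ∀ s t : ℝ, (∫ ω', (if s < qv 0 ω' ∧ qv 0 ω' ≤ t then (1 : ℝ) else 0) ∂μ)
      = (μ {ω | s < qv 0 ω ∧ qv 0 ω ≤ t}).toReal := by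
    intro s t
    have heq : (fun ω => if s < qv 0 ω ∧ qv 0 ω ≤ t then (1 : ℝ) else 0)
        = Set.indicator {ω | s < qv 0 ω ∧ qv 0 ω ≤ t} (fun _ => 1) := by
      funext ω
      simp [Set.indicator_apply, Set.mem_setOf_eq]
    rw [heq]
    exact integral_indicator_one (hsetMeas s t)
  have hMptw : ∀ (M : ℝ), 1 ≤ M → ∀ (s t x y : ℝ),
      (if s < y ∧ y ≤ t then |x| else 0)
        ≤ |x| ^ r * (M ^ (r - 1))⁻¹ + M * (if s < y ∧ y ≤ t then (1 : ℝ) else 0) := by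
    intro M hM s t x y
    have hMpos : (0 : ℝ) < M := lt_of_lt_of_le one_pos hM
    have hMr : (0 : ℝ) < M ^ (r - 1) := Real.rpow_pos_of_pos hMpos _
    have hxr : (0 : ℝ) ≤ |x| ^ r * (M ^ (r - 1))⁻¹ := by positivity
    split_ifs with hcond
    · rw [mul_one]
      rcases le_or_gt (|x|) M with hxM | hxM
      · linarith
      · have hx0 : (0 : ℝ) < |x| := lt_of_le_of_lt (by linarith) hxM
        have hmono : M ^ (r - 1) ≤ |x| ^ (r - 1) :=
          Real.rpow_le_rpow hMpos.le hxM.le (by linarith)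
        have h2 : |x| * M ^ (r - 1) ≤ |x| * |x| ^ (r - 1) := by nlinarith
        have h4 : |x| * M ^ (r - 1) ≤ |x| ^ r := by
          have h3 : |x| ^ (r - 1) = |x| ^ r / |x| := by
            rw [Real.rpow_sub hx0, Real.rpow_one]
          refine h2.trans (le_of_eq ?_)
          rw [h3]
          field_simp
        have h5 : |x| ≤ |x| ^ r * (M ^ (r - 1))⁻¹ := by
          rw [← div_eq_mul_inv, le_div_iff₀ hMr]
          exact h4
      -- note: exponent `r = 1 + (r-1)` rewrite also changed `hxr`? no, goal only
        linarith
    · simpa using hxr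
  have hρbound : ∀ (M : ℝ), 1 ≤ M → ∀ s t : ℚ, (s : ℝ) ≤ (t : ℝ) →
      ρInt μ a qv s t ≤ K * (M ^ (r - 1))⁻¹ + M * (B' * ((t : ℝ) - (s : ℝ))) := by
    intro M hM s t hst
    have hMpos : (0 : ℝ) < M := lt_of_lt_of_le one_pos hM
    have step1 : ρInt μ a qv s t ≤ ∫ ω', (|a 0 ω'| ^ r * (M ^ (r - 1))⁻¹
        + M * (if (s : ℝ) < qv 0 ω' ∧ qv 0 ω' ≤ (t : ℝ) then (1 : ℝ) else 0)) ∂μ := by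
      refine integral_mono (hRInt _ _) ?_ (fun ω => hMptw M hM _ _ _ _)
      exact (hmom.mul_const _).add ((hIndInt _ _).const_mul M)
    rw [integral_add (hmom.mul_const _) ((hIndInt _ _).const_mul M),
        integral_mul_const, integral_const_mul, hIndVal] at step1
    have hμ := hμle (s : ℝ) (t : ℝ) hst
    have := mul_le_mul_of_nonneg_left hμ hMpos.le
    linarith
  have hρ : ∀ ε : ℝ, 0 < ε → ∃ h : ℚ, 0 < h ∧ ∀ s : ℚ, ρInt μ a qv s (s + h) < ε := by
    intro ε hε
    have hlim : Tendsto (fun M : ℝ => K * (M ^ (r - 1))⁻¹) atTop (𝓝 0) := by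
      have h1 : Tendsto (fun M : ℝ => M ^ (r - 1)) atTop atTop :=
        tendsto_rpow_atTop (by linarith)
      simpa using h1.inv_tendsto_atTop.const_mul K
    obtain ⟨M, hM⟩ := ((hlim.eventually_lt_const (show (0 : ℝ) < ε / 2 by linarith)).and
      (eventually_ge_atTop (1 : ℝ))).exists
    obtain ⟨hM2, hM1⟩ := hM
    have hMpos : (0 : ℝ) < M := lt_of_lt_of_le one_pos hM1
    have hpos : (0 : ℝ) < ε / (2 * M * B') := by positivity
    obtain ⟨h, h0, hlt⟩ := exists_rat_btwn hpos
    refine ⟨h, by exact_mod_cast h0, fun s => ?_⟩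
    have hsh : (s : ℝ) ≤ ((s + h : ℚ) : ℝ) := by push_cast; linarith
    have hb := hρbound M hM1 s (s + h) hsh
    have hdiffeq : ((s + h : ℚ) : ℝ) - (s : ℝ) = (h : ℝ) := by push_cast; ring
    rw [hdiffeq] at hb
    have hstep : M * (B' * (h : ℝ)) < ε / 2 := by
      rw [lt_div_iff₀ (by positivity)] at hlt
      nlinarith
    linarith
  -- a.e. convergence at rational points
  have haeS : ∀ᵐ ω ∂μ, ∀ q : ℚ,
      Tendsto (fun T => Savg a qv (q : ℝ) T ω) atTop (𝓝 (mInt μ a qv (q : ℝ))) := by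
    rw [ae_all_iff]
    intro q
    exact slln_comp a qv hmeas hindep hident hInt_abs
      (fun z => if z.2 ≤ (q : ℝ) then z.1 else 0)
      (Measurable.ite (measurableSet_le measurable_snd measurable_const)
        measurable_fst measurable_const)
      (fun z => by split_ifs <;> simp [abs_nonneg])
  have haeR : ∀ᵐ ω ∂μ, ∀ s t : ℚ,
      Tendsto (fun T => Ravg a qv s t T ω) atTop (𝓝 (ρInt μ a qv s t)) := by
    rw [ae_all_iff]
    intro s
    rw [ae_all_iff]
    intro t
    exact slln_comp a qv hmeas hindep hident hInt_abs
      (fun z => if (s : ℝ) < z.2 ∧ z.2 ≤ (t : ℝ) then |z.1| else 0)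
      (Measurable.ite ((measurableSet_lt measurable_const measurable_snd).inter
        (measurableSet_le measurable_snd measurable_const)) measurable_fst.abs measurable_const)
      (fun z => by split_ifs <;> simp [abs_nonneg])
  -- measurability of the supremum
  have hSmeasω : ∀ (γ : ℝ) (T : ℕ), Measurable (fun ω => Savg a qv γ T ω) := by
    intro γ T
    unfold Savg
    exact measurable_const.mul (Finset.measurable_sum _ fun t _ =>
      Measurable.ite (measurableSet_le (hmeas t).2 measurable_const) (hmeas t).1 measurable_const)
  have hbound : ∀ (T : ℕ) (ω : Ω) (γ : ℝ), |Savg a qv γ T ω - mInt μ a qv γ|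
      ≤ (T : ℝ)⁻¹ * ∑ t ∈ Finset.range T, |a t ω| + ∫ ω', |a 0 ω'| ∂μ := by
    intro T ω γ
    have h1 : |Savg a qv γ T ω| ≤ (T : ℝ)⁻¹ * ∑ t ∈ Finset.range T, |a t ω| := by
      unfold Savg
      rw [abs_mul, abs_inv, Nat.abs_cast]
      refine mul_le_mul_of_nonneg_left ((Finset.abs_sum_le_sum_abs _ _).trans
        (Finset.sum_le_sum fun t _ => ?_)) (by positivity)
      split_ifs <;> simp [abs_nonneg]
    have h2 : |mInt μ a qv γ| ≤ ∫ ω', |a 0 ω'| ∂μ := by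
      unfold mInt
      have := norm_integral_le_integral_norm (μ := μ)
        (fun ω' => if qv 0 ω' ≤ γ then a 0 ω' else 0)
      rw [Real.norm_eq_abs] at this
      refine this.trans (integral_mono ?_ hInt_abs fun ω' => ?_)
      · exact (hIntInd γ).norm
      · rw [Real.norm_eq_abs]
        split_ifs <;> simp [abs_nonneg]
    calc |Savg a qv γ T ω - mInt μ a qv γ| ≤ |Savg a qv γ T ω| + |mInt μ a qv γ| := abs_sub _ _
      _ ≤ _ := add_le_add h1 h2
  have hm_rc : ∀ (γ : ℝ) (u : ℕ → ℝ), (∀ n, γ < u n) → Tendsto u atTop (𝓝 γ) →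
      Tendsto (fun n => mInt μ a qv (u n)) atTop (𝓝 (mInt μ a qv γ)) := by
    intro γ u hu hul
    unfold mInt
    refine tendsto_integral_of_dominated_convergence (fun ω => |a 0 ω|)
      (fun n => (hiteMeas (u n)).aestronglyMeasurable) hInt_abs
      (fun n => ae_of_all _ fun ω => ?_) (ae_of_all _ fun ω => ?_)
    · rw [Real.norm_eq_abs]
      split_ifs <;> simp [abs_nonneg]
    · by_cases hq : qv 0 ω ≤ γ
      · have heq : ∀ n, (if qv 0 ω ≤ u n then a 0 ω else 0) = a 0 ω :=
          fun n => if_pos (hq.trans (hu n).le)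
        simp only [heq, if_pos hq]
        exact tendsto_const_nhds
      · push_neg at hq
        have hev : ∀ᶠ n in atTop, (if qv 0 ω ≤ u n then a 0 ω else 0) = 0 := by
          filter_upwards [hul.eventually_lt_const hq] with n hn
          exact if_neg (not_le.2 hn)
        rw [if_neg (not_le.2 hq)]
        exact Tendsto.congr' (hev.mono fun n hn => hn.symm) tendsto_const_nhds
  have hS_rc : ∀ (γ : ℝ) (T : ℕ) (ω : Ω) (u : ℕ → ℝ), (∀ n, γ < u n) → Tendsto u atTop (𝓝 γ) →
      Tendsto (fun n => Savg a qv (u n) T ω) atTop (𝓝 (Savg a qv γ T ω)) := by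
    intro γ T ω u hu hul
    have hev : ∀ᶠ n in atTop, Savg a qv (u n) T ω = Savg a qv γ T ω := by
      have hall : ∀ᶠ n in atTop, ∀ t ∈ Finset.range T,
          (if qv t ω ≤ u n then a t ω else 0) = (if qv t ω ≤ γ then a t ω else 0) := by
        rw [Finset.eventually_all]
        intro t _
        by_cases hq : qv t ω ≤ γ
        · exact Eventually.of_forall fun n => by rw [if_pos (hq.trans (hu n).le), if_pos hq]
        · push_neg at hq
          filter_upwards [hul.eventually_lt_const hq] with n hn
          rw [if_neg (not_le.2 hn), if_neg (not_le.2 hq)]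
      filter_upwards [hall] with n hn
      unfold Savg
      rw [Finset.sum_congr rfl hn]
    exact Tendsto.congr' (hev.mono fun n hn => hn.symm) tendsto_const_nhds
  have hFmeas : ∀ T : ℕ, Measurable
      (fun ω => ⨆ γ : Set.Icc c d, |Savg a qv (γ : ℝ) T ω - mInt μ a qv (γ : ℝ)|) := by
    intro T
    rcases le_or_gt c d with hcd | hcd
    · have hne : Nonempty (Set.Icc c d) := Set.Nonempty.to_subtype (Set.nonempty_Icc.2 hcd)
      have hd : d ∈ Set.Icc c d := Set.right_mem_Icc.2 hcd
      have key : ∀ ω, (⨆ γ : Set.Icc c d, |Savg a qv (γ : ℝ) T ω - mInt μ a qv (γ : ℝ)|)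
          = max (|Savg a qv d T ω - mInt μ a qv d|)
            (⨆ q : {q : ℚ // (q : ℝ) ∈ Set.Icc c d},
              |Savg a qv ((q : ℚ) : ℝ) T ω - mInt μ a qv ((q : ℚ) : ℝ)|) := by
        intro ω
        set C := (T : ℝ)⁻¹ * ∑ t ∈ Finset.range T, |a t ω| + ∫ ω', |a 0 ω'| ∂μ with hC
        have hbdd1 : BddAbove (Set.range fun γ : Set.Icc c d =>
            |Savg a qv (γ : ℝ) T ω - mInt μ a qv (γ : ℝ)|) := by
          refine ⟨C, ?_⟩
          rintro x ⟨γ, rfl⟩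
          exact hbound T ω _
        have hbdd2 : BddAbove (Set.range fun q : {q : ℚ // (q : ℝ) ∈ Set.Icc c d} =>
            |Savg a qv ((q : ℚ) : ℝ) T ω - mInt μ a qv ((q : ℚ) : ℝ)|) := by
          refine ⟨C, ?_⟩
          rintro x ⟨q, rfl⟩
          exact hbound T ω _
        apply le_antisymm
        · refine ciSup_le fun γ => ?_
          rcases eq_or_lt_of_le γ.2.2 with hγd | hγd
          · rw [hγd]
            exact le_max_left _ _
          · have hseq : ∀ n : ℕ, ∃ q : ℚ, (γ : ℝ) < q ∧ (q : ℝ) < min d ((γ : ℝ) + 1 / (n + 1)) := by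
              intro n
              apply exists_rat_btwn
              apply lt_min hγd
              have hpos : (0 : ℝ) < 1 / ((n : ℝ) + 1) := by positivity
              linarith
            choose u hu1 hu2 using hseq
            have humem : ∀ n, ((u n : ℝ)) ∈ Set.Icc c d := fun n =>
              ⟨γ.2.1.trans (hu1 n).le, ((hu2 n).trans_le (min_le_left _ _)).le⟩
            have hulim : Tendsto (fun n => (u n : ℝ)) atTop (𝓝 (γ : ℝ)) := by
              refine tendsto_of_tendsto_of_tendsto_of_le_of_le (g := fun _ => (γ : ℝ))
                (h := fun n : ℕ => (γ : ℝ) + 1 / ((n : ℝ) + 1)) tendsto_const_nhds ?_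
                (fun n => (hu1 n).le)
                (fun n => ((hu2 n).trans_le (min_le_right _ _)).le)
              have h0 := tendsto_one_div_add_atTop_nhds_zero_nat (𝕜 := ℝ)
              simpa using (tendsto_const_nhds (x := (γ : ℝ)) (f := atTop)).add h0
            have hconv : Tendsto (fun n => |Savg a qv (u n : ℝ) T ω - mInt μ a qv (u n : ℝ)|)
                atTop (𝓝 (|Savg a qv (γ : ℝ) T ω - mInt μ a qv (γ : ℝ)|)) :=
              ((hS_rc _ T ω _ hu1 hulim).sub (hm_rc _ _ hu1 hulim)).abs
            refine le_of_tendsto hconv (Eventually.of_forall fun n => ?_)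
            exact le_max_of_le_right (le_ciSup hbdd2 ⟨u n, humem n⟩)
        · refine max_le (le_ciSup hbdd1 ⟨d, hd⟩) ?_
          refine Real.iSup_le (fun q => le_ciSup hbdd1 ⟨((q : ℚ) : ℝ), q.2⟩) ?_
          exact le_trans (abs_nonneg _) (le_ciSup hbdd1 ⟨d, hd⟩)
      simp only [key]
      refine Measurable.max (((hSmeasω d T).sub measurable_const).abs) ?_
      exact Measurable.iSup fun q => ((hSmeasω _ T).sub measurable_const).abs
    · haveI : IsEmpty (Set.Icc c d) := by
        rw [Set.isEmpty_coe_sort, Set.Icc_eq_empty_iff]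
        exact not_le.2 hcd
      have heq : (fun ω => ⨆ γ : Set.Icc c d, |Savg a qv (γ : ℝ) T ω - mInt μ a qv (γ : ℝ)|)
          = fun _ => (0 : ℝ) := by
        funext ω
        exact Real.iSup_of_isEmpty _
      rw [heq]
      exact measurable_const
  -- a.e. uniform convergence
  have hae : ∀ᵐ ω ∂μ, Tendsto
      (fun T => ⨆ γ : Set.Icc c d, |Savg a qv (γ : ℝ) T ω - mInt μ a qv (γ : ℝ)|)
      atTop (𝓝 0) := by
    filter_upwards [haeS, haeR] with ω h1 h2
    exact det_unif (fun γ T => Savg a qv γ T ω) (mInt μ a qv)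
      (fun s t T => Ravg a qv s t T ω) (ρInt μ a qv)
      h1 h2 (fun s t γ hs ht T => hSdiff ω s t γ hs ht T) hmdiff hρ c d
  exact tendstoInMeasure_of_tendsto_ae (fun T => (hFmeas T).aestronglyMeasurable) hae
end

section
/- Let η_t, t=1,...,T, be i.i.d. mean-zero random variables with unit variance and E|η_t| ≤ C, independent of the array {z_t}, where z_t ∈ R^q satisfies T⁻¹ Σ_t ‖z_t‖⁴ = O_p(1) and T⁻¹ Σ_{t≠s} ‖z_t‖²‖z_s‖² = O_p(T). Then T⁻¹ Σ_{t=1}^T z_t z_tᵀ η_t 1[q_t ≤ γ] → 0 in conditional probability (given the data), uniformly in γ. -/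
open MeasureTheory ProbabilityTheory Filter Matrix

/-- The Frobenius norm of a real matrix. -/
noncomputable def frobNorm {m n : Type*} [Fintype m] [Fintype n] (M : Matrix m n ℝ) : ℝ :=
  Real.sqrt (∑ i, ∑ j, (M i j) ^ 2)

/-- The Euclidean norm of a vector in `ℝⁿ`. -/
noncomputable def eucNorm {n : ℕ} (v : Fin n → ℝ) : ℝ :=
  Real.sqrt (∑ i, v i ^ 2)

noncomputable def matToEuc {q : ℕ} : Matrix (Fin q) (Fin q) ℝ →ₗ[ℝ] EuclideanSpace ℝ (Fin q × Fin q) :=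
  ((WithLp.linearEquiv 2 ℝ ((Fin q × Fin q) → ℝ)).symm : ((Fin q × Fin q) → ℝ) →ₗ[ℝ] _) ∘ₗ
    { toFun := fun M => fun p : Fin q × Fin q => M p.1 p.2
      map_add' := fun M N => by funext p; rfl
      map_smul' := fun c M => by funext p; rfl }

lemma frobNorm_eq_norm {q : ℕ} (M : Matrix (Fin q) (Fin q) ℝ) :
    frobNorm M = ‖matToEuc M‖ := by
  rw [EuclideanSpace.norm_eq, frobNorm]
  congr 1
  rw [Fintype.sum_prod_type]
  simp [matToEuc, Real.norm_eq_abs, sq_abs]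

lemma frobNorm_sum_le {q : ℕ} {ι : Type*} (s : Finset ι) (f : ι → Matrix (Fin q) (Fin q) ℝ) :
    frobNorm (∑ t ∈ s, f t) ≤ ∑ t ∈ s, frobNorm (f t) := by
  simp only [frobNorm_eq_norm, map_sum]
  exact norm_sum_le s _

lemma frobNorm_smul {q : ℕ} (c : ℝ) (M : Matrix (Fin q) (Fin q) ℝ) :
    frobNorm (c • M) = |c| * frobNorm M := by
  rw [frobNorm_eq_norm, frobNorm_eq_norm, _root_.map_smul, norm_smul, Real.norm_eq_abs]

lemma frobNorm_zero {q : ℕ} : frobNorm (0 : Matrix (Fin q) (Fin q) ℝ) = 0 := by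
  simp [frobNorm]

lemma frobNorm_vecMulVec_self {q : ℕ} (v : Fin q → ℝ) :
    frobNorm (vecMulVec v v) = eucNorm v ^ 2 := by
  have hs : (0:ℝ) ≤ ∑ i, v i ^ 2 := Finset.sum_nonneg fun i _ => sq_nonneg _
  rw [frobNorm, eucNorm, Real.sq_sqrt hs]
  have h : ∑ i, ∑ j, (vecMulVec v v i j) ^ 2 = (∑ i, v i ^ 2) * (∑ j, v j ^ 2) := by
    rw [Finset.sum_mul_sum]
    simp [vecMulVec, mul_pow]
  rw [h, ← sq, Real.sqrt_sq hs]

private lemma key_bound {Ωb : Type*} [MeasurableSpace Ωb] (ν : Measure Ωb) [IsProbabilityMeasure ν]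
    {q : ℕ} (η : ℕ → Ωb → ℝ) (C : ℝ) (hC : 0 ≤ C)
    (v : ℕ → Fin q → ℝ) (qq : ℕ → ℝ) (T : ℕ) (hT : 1 ≤ T)
    (hmeas : ∀ t, AEMeasurable (η t) ν)
    (hint_sq : ∀ t, Integrable (fun ω => η t ω ^ 2) ν)
    (hvar' : ∀ t, ∫ ω, η t ω ^ 2 ∂ν = 1)
    (hint_abs : ∀ t, Integrable (fun ω => |η t ω|) ν)
    (hprod : ∀ t s, t ≠ s → Integrable (fun ω => |η t ω| * |η s ω|) ν ∧
      ∫ ω, |η t ω| * |η s ω| ∂ν ≤ C ^ 2)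
    (e : ℝ) (he : 0 < e) :
    (ν {ωb | e ≤ ⨆ γ : ℝ, frobNorm ((T : ℝ)⁻¹ • ∑ t ∈ Finset.range T,
        (if qq t ≤ γ then η t ωb • vecMulVec (v t) (v t) else 0))}).toReal ≤
      ((∑ t ∈ Finset.range T, eucNorm (v t) ^ 4) + C ^ 2 *
        (∑ t ∈ Finset.range T, ∑ s ∈ Finset.range T,
          if s ≠ t then eucNorm (v t) ^ 2 * eucNorm (v s) ^ 2 else 0)) / (e ^ 2 * (T : ℝ) ^ 2) := by
  have hTpos : (0:ℝ) < (T:ℝ) := by exact_mod_cast hT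
  set a : ℕ → ℝ := fun t => eucNorm (v t) ^ 2 with ha_def
  have ha : ∀ t, 0 ≤ a t := fun t => sq_nonneg _
  set W : Ωb → ℝ := fun ωb => ∑ t ∈ Finset.range T, a t * |η t ωb| with hW_def
  set S : Ωb → ℝ := fun ωb => (T : ℝ)⁻¹ * W ωb with hS_def
  have hWnonneg : ∀ ωb, 0 ≤ W ωb := fun ωb =>
    Finset.sum_nonneg fun t _ => mul_nonneg (ha t) (abs_nonneg _)
  -- step A : sup ≤ S
  have hsup : ∀ ωb, (⨆ γ : ℝ, frobNorm ((T : ℝ)⁻¹ • ∑ t ∈ Finset.range T,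
      (if qq t ≤ γ then η t ωb • vecMulVec (v t) (v t) else 0))) ≤ S ωb := by
    intro ωb
    refine ciSup_le fun γ => ?_
    rw [frobNorm_smul]
    have h1 : frobNorm (∑ t ∈ Finset.range T,
        (if qq t ≤ γ then η t ωb • vecMulVec (v t) (v t) else 0)) ≤ W ωb := by
      refine (frobNorm_sum_le _ _).trans (Finset.sum_le_sum fun t _ => ?_)
      by_cases h : qq t ≤ γ
      · rw [if_pos h, frobNorm_smul, frobNorm_vecMulVec_self, mul_comm]
      · rw [if_neg h, frobNorm_zero]
        exact mul_nonneg (ha t) (abs_nonneg _)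
    calc |(T:ℝ)⁻¹| * frobNorm (∑ t ∈ Finset.range T,
          (if qq t ≤ γ then η t ωb • vecMulVec (v t) (v t) else 0))
        ≤ |(T:ℝ)⁻¹| * W ωb := mul_le_mul_of_nonneg_left h1 (abs_nonneg _)
      _ = S ωb := by rw [abs_of_nonneg (inv_nonneg.2 hTpos.le)]
  -- integrability of products
  have hPint : ∀ t s, Integrable (fun ωb => (a t * |η t ωb|) * (a s * |η s ωb|)) ν := by
    intro t s
    rcases eq_or_ne t s with rfl | hts
    · have h : (fun ωb => (a t * |η t ωb|) * (a t * |η t ωb|))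
          = fun ωb => (a t * a t) * η t ωb ^ 2 := by
        funext ωb; rw [mul_mul_mul_comm, abs_mul_abs_self]; ring
      rw [h]; exact (hint_sq t).const_mul _
    · have h : (fun ωb => (a t * |η t ωb|) * (a s * |η s ωb|))
          = fun ωb => (a t * a s) * (|η t ωb| * |η s ωb|) := by
        funext ωb; rw [mul_mul_mul_comm]
      rw [h]; exact ((hprod t s hts).1).const_mul _
  -- expectation bound for products
  have hEP : ∀ t ∈ Finset.range T, ∀ s ∈ Finset.range T,
      ∫ ωb, (a t * |η t ωb|) * (a s * |η s ωb|) ∂ν ≤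
        (if s = t then a t ^ 2 else 0) + (if s ≠ t then a t * a s * C ^ 2 else 0) := by
    intro t _ s _
    rcases eq_or_ne s t with rfl | hts
    · rw [if_pos rfl, if_neg (by simp), add_zero]
      have h : (fun ωb => (a s * |η s ωb|) * (a s * |η s ωb|))
          = fun ωb => (a s * a s) * η s ωb ^ 2 := by
        funext ωb; rw [mul_mul_mul_comm, abs_mul_abs_self]; ring
      rw [show (∫ ωb, (a s * |η s ωb|) * (a s * |η s ωb|) ∂ν)
          = ∫ ωb, (a s * a s) * η s ωb ^ 2 ∂ν from by rw [h]]
      rw [integral_const_mul, hvar' s, mul_one, ← sq]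
    · simp only [if_neg hts, if_pos hts, zero_add]
      have h : (fun ωb => (a t * |η t ωb|) * (a s * |η s ωb|))
          = fun ωb => (a t * a s) * (|η t ωb| * |η s ωb|) := by
        funext ωb; rw [mul_mul_mul_comm]
      rw [show (∫ ωb, (a t * |η t ωb|) * (a s * |η s ωb|) ∂ν)
          = ∫ ωb, (a t * a s) * (|η t ωb| * |η s ωb|) ∂ν from by rw [h]]
      rw [integral_const_mul]
      exact mul_le_mul_of_nonneg_left ((hprod t s (fun h' => hts (h'.symm))).2)
        (mul_nonneg (ha t) (ha s))
  -- W² as a double sum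
  have hWsq : (fun ωb => W ωb ^ 2) = fun ωb => ∑ t ∈ Finset.range T, ∑ s ∈ Finset.range T,
      (a t * |η t ωb|) * (a s * |η s ωb|) := by
    funext ωb; rw [sq, hW_def, Finset.sum_mul_sum]
  have hintWsq : Integrable (fun ωb => W ωb ^ 2) ν := by
    rw [hWsq]
    exact integrable_finset_sum _ fun t _ => integrable_finset_sum _ fun s _ => hPint t s
  have hEW : ∫ ωb, W ωb ^ 2 ∂ν ≤ (∑ t ∈ Finset.range T, eucNorm (v t) ^ 4) + C ^ 2 *
      (∑ t ∈ Finset.range T, ∑ s ∈ Finset.range T,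
        if s ≠ t then eucNorm (v t) ^ 2 * eucNorm (v s) ^ 2 else 0) := by
    have h1 : ∫ ωb, W ωb ^ 2 ∂ν = ∑ t ∈ Finset.range T, ∑ s ∈ Finset.range T,
        ∫ ωb, (a t * |η t ωb|) * (a s * |η s ωb|) ∂ν := by
      rw [show (∫ ωb, W ωb ^ 2 ∂ν) = ∫ ωb, ∑ t ∈ Finset.range T, ∑ s ∈ Finset.range T,
          (a t * |η t ωb|) * (a s * |η s ωb|) ∂ν from by rw [← hWsq]]
      rw [integral_finset_sum _ fun t _ => integrable_finset_sum _ fun s _ => hPint t s]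
      exact Finset.sum_congr rfl fun t _ => integral_finset_sum _ fun s _ => hPint t s
    rw [h1]
    calc ∑ t ∈ Finset.range T, ∑ s ∈ Finset.range T,
          ∫ ωb, (a t * |η t ωb|) * (a s * |η s ωb|) ∂ν
        ≤ ∑ t ∈ Finset.range T, ∑ s ∈ Finset.range T,
          ((if s = t then a t ^ 2 else 0) + (if s ≠ t then a t * a s * C ^ 2 else 0)) :=
          Finset.sum_le_sum fun t ht => Finset.sum_le_sum fun s hs => hEP t ht s hs
      _ = _ := by
          rw [show (∑ t ∈ Finset.range T, ∑ s ∈ Finset.range T,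
            ((if s = t then a t ^ 2 else 0) + (if s ≠ t then a t * a s * C ^ 2 else 0)))
            = (∑ t ∈ Finset.range T, ∑ s ∈ Finset.range T, (if s = t then a t ^ 2 else 0))
              + ∑ t ∈ Finset.range T, ∑ s ∈ Finset.range T,
                (if s ≠ t then a t * a s * C ^ 2 else 0) from by
            rw [← Finset.sum_add_distrib]
            exact Finset.sum_congr rfl fun t _ => Finset.sum_add_distrib]
          congr 1
          · refine Finset.sum_congr rfl fun t ht => ?_
            rw [Finset.sum_ite_eq' (Finset.range T) t (fun s => a t ^ 2), if_pos ht]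
            rw [ha_def, ← pow_mul]
          · rw [Finset.mul_sum]
            refine Finset.sum_congr rfl fun t _ => ?_
            rw [Finset.mul_sum]
            refine Finset.sum_congr rfl fun s _ => ?_
            by_cases h : s ≠ t
            · rw [if_pos h, if_pos h, ha_def]; ring
            · rw [if_neg h, if_neg h, mul_zero]
  -- S² facts
  have hSsq : (fun ωb => S ωb ^ 2) = fun ωb => ((T:ℝ)⁻¹) ^ 2 * W ωb ^ 2 := by
    funext ωb; rw [hS_def, mul_pow]
  have hintSsq : Integrable (fun ωb => S ωb ^ 2) ν := by
    rw [hSsq]; exact hintWsq.const_mul _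
  have hES : ∫ ωb, S ωb ^ 2 ∂ν = ((T:ℝ)⁻¹) ^ 2 * ∫ ωb, W ωb ^ 2 ∂ν := by
    rw [show (∫ ωb, S ωb ^ 2 ∂ν) = ∫ ωb, ((T:ℝ)⁻¹) ^ 2 * W ωb ^ 2 ∂ν from by rw [← hSsq]]
    exact integral_const_mul _ _
  -- Markov
  have hmark := mul_meas_ge_le_integral_of_nonneg
    (ae_of_all ν fun ωb => sq_nonneg (S ωb)) hintSsq (e ^ 2)
  have hsub : {ωb | e ≤ ⨆ γ : ℝ, frobNorm ((T : ℝ)⁻¹ • ∑ t ∈ Finset.range T,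
      (if qq t ≤ γ then η t ωb • vecMulVec (v t) (v t) else 0))} ⊆
      {ωb | e ^ 2 ≤ S ωb ^ 2} := by
    intro ωb hωb
    have hS' : e ≤ S ωb := le_trans hωb (hsup ωb)
    exact pow_le_pow_left₀ he.le hS' 2
  calc (ν {ωb | e ≤ ⨆ γ : ℝ, frobNorm ((T : ℝ)⁻¹ • ∑ t ∈ Finset.range T,
        (if qq t ≤ γ then η t ωb • vecMulVec (v t) (v t) else 0))}).toReal
      ≤ (ν {ωb | e ^ 2 ≤ S ωb ^ 2}).toReal :=
        ENNReal.toReal_mono (measure_ne_top ν _) (measure_mono hsub)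
    _ ≤ (∫ ωb, S ωb ^ 2 ∂ν) / e ^ 2 := by
        rw [le_div_iff₀ (by positivity)]
        calc (ν {ωb | e ^ 2 ≤ S ωb ^ 2}).toReal * e ^ 2
            = e ^ 2 * (ν {ωb | e ^ 2 ≤ S ωb ^ 2}).toReal := mul_comm _ _
          _ ≤ _ := hmark
    _ ≤ _ := by
        rw [hES]
        rw [div_le_div_iff₀ (by positivity) (by positivity)]
        calc ((T:ℝ)⁻¹) ^ 2 * (∫ ωb, W ωb ^ 2 ∂ν) * (e ^ 2 * (T:ℝ) ^ 2)
            = (∫ ωb, W ωb ^ 2 ∂ν) * e ^ 2 := by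
              field_simp
          _ ≤ _ := mul_le_mul_of_nonneg_right hEW (sq_nonneg e)

/-- For i.i.d. wild-bootstrap multipliers `η_t` (mean zero, unit variance, bounded first
absolute moment), independent of the data (modelled by a product of probability spaces),
with `T⁻¹ Σ_t ‖z_t‖⁴ = O_p(1)` and `T⁻¹ Σ_{t≠s} ‖z_t‖²‖z_s‖² = O_p(T)`, the quantity
`T⁻¹ Σ_t z_t z_tᵀ η_t 1[q_t ≤ γ]` tends to `0` in conditional (bootstrap) probability,
uniformly in `γ`. -/
theorem stmt8 {Ωd Ωb : Type*} [MeasurableSpace Ωd] [MeasurableSpace Ωb]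
    (μ : Measure Ωd) (ν : Measure Ωb) [IsProbabilityMeasure μ] [IsProbabilityMeasure ν]
    {q : ℕ} (z : ℕ → Ωd → Fin q → ℝ) (qv : ℕ → Ωd → ℝ) (η : ℕ → Ωb → ℝ) (C : ℝ)
    (hη_indep : iIndepFun η ν)
    (hη_ident : ∀ t, IdentDistrib (η t) (η 0) ν ν)
    (hmean : ∫ ω, η 0 ω ∂ν = 0) (hvar : ∫ ω, (η 0 ω) ^ 2 ∂ν = 1)
    (habs : ∫ ω, |η 0 ω| ∂ν ≤ C)
    (hz4 : ∀ e : ℝ, 0 < e → ∃ M : ℝ, ∀ᶠ T : ℕ in atTop,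
      (μ {ω | M < (T : ℝ)⁻¹ * ∑ t ∈ Finset.range T, eucNorm (z t ω) ^ 4}).toReal < e)
    (hcross : ∀ e : ℝ, 0 < e → ∃ M : ℝ, ∀ᶠ T : ℕ in atTop,
      (μ {ω | M * T < ∑ t ∈ Finset.range T, ∑ s ∈ Finset.range T,
          if s ≠ t then eucNorm (z t ω) ^ 2 * eucNorm (z s ω) ^ 2 else 0}).toReal < e) :
    ∀ e : ℝ, 0 < e →
      TendstoInMeasure μ
        (fun (T : ℕ) ωd =>
          (ν {ωb | e ≤ ⨆ γ : ℝ, frobNorm ((T : ℝ)⁻¹ • ∑ t ∈ Finset.range T,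
              (if qv t ωd ≤ γ then η t ωb • vecMulVec (z t ωd) (z t ωd) else 0))}).toReal)
        atTop (fun _ => (0 : ℝ)) := by
  -- basic facts about η
  have hmeas0 : AEMeasurable (η 0) ν := (hη_ident 0).aemeasurable_snd
  have hmeas : ∀ t, AEMeasurable (η t) ν := fun t => (hη_ident t).aemeasurable_fst
  have hsq_ident : ∀ t, IdentDistrib (fun ω => η t ω ^ 2) (fun ω => η 0 ω ^ 2) ν ν := by
    intro t
    exact (hη_ident t).comp (measurable_id.pow_const 2)
  have hint_sq0 : Integrable (fun ω => η 0 ω ^ 2) ν := by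
    by_contra h
    rw [integral_undef h] at hvar
    exact one_ne_zero hvar.symm
  have hint_sq : ∀ t, Integrable (fun ω => η t ω ^ 2) ν :=
    fun t => (hsq_ident t).integrable_iff.2 hint_sq0
  have hvar' : ∀ t, ∫ ω, η t ω ^ 2 ∂ν = 1 := fun t => ((hsq_ident t).integral_eq).trans hvar
  have habs_ident : ∀ t, IdentDistrib (fun ω => |η t ω|) (fun ω => |η 0 ω|) ν ν := by
    intro t
    exact (hη_ident t).comp measurable_abs
  have hint_abs0 : Integrable (fun ω => |η 0 ω|) ν := by
    refine (hint_sq0.add (integrable_const 1)).mono (measurable_abs.comp_aemeasurable hmeas0).aestronglyMeasurable ?_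
    filter_upwards with ω
    rw [Real.norm_eq_abs, Real.norm_eq_abs, abs_abs]
    have h1 : |η 0 ω| ≤ η 0 ω ^ 2 + 1 := by nlinarith [abs_nonneg (η 0 ω), sq_abs (η 0 ω)]
    exact h1.trans (le_abs_self _)
  have hint_abs : ∀ t, Integrable (fun ω => |η t ω|) ν :=
    fun t => (habs_ident t).integrable_iff.2 hint_abs0
  have hm₀0 : 0 ≤ ∫ ω, |η 0 ω| ∂ν := integral_nonneg fun ω => abs_nonneg _
  have hC : 0 ≤ C := hm₀0.trans habs
  have habs' : ∀ t, ∫ ω, |η t ω| ∂ν = ∫ ω, |η 0 ω| ∂ν := fun t => (habs_ident t).integral_eq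
  have hprod : ∀ t s, t ≠ s → Integrable (fun ω => |η t ω| * |η s ω|) ν ∧
      ∫ ω, |η t ω| * |η s ω| ∂ν ≤ C ^ 2 := by
    intro t s hts
    have hind : IndepFun (fun ω => |η t ω|) (fun ω => |η s ω|) ν :=
      (hη_indep.indepFun hts).comp measurable_abs measurable_abs
    constructor
    · exact hind.integrable_mul (hint_abs t) (hint_abs s)
    · have h1 : ∫ ω, |η t ω| * |η s ω| ∂ν = (∫ ω, |η t ω| ∂ν) * ∫ ω, |η s ω| ∂ν :=
        hind.integral_fun_mul_eq_mul_integral (hint_abs t).aestronglyMeasurable (hint_abs s).aestronglyMeasurable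
      rw [h1, habs' t, habs' s, sq]
      exact mul_le_mul habs habs hm₀0 hC
  intro e he
  rw [tendstoInMeasure_iff_dist]
  intro δ hδ
  rw [ENNReal.tendsto_nhds_zero]
  intro ε' hε'
  by_cases htop : 1 ≤ ε'
  · filter_upwards with T
    exact le_trans prob_le_one htop
  push_neg at htop
  have hε'top : ε' ≠ ⊤ := (htop.trans ENNReal.one_lt_top).ne
  set r : ℝ := ε'.toReal with hr_def
  have hr : 0 < r := ENNReal.toReal_pos hε'.ne' hε'top
  obtain ⟨M₁, hM₁⟩ := hz4 (r / 2) (by positivity)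
  obtain ⟨M₂, hM₂⟩ := hcross (r / 2) (by positivity)
  set c₁ : ℝ := δ * e ^ 2 / 2 with hc₁_def
  have hc₁ : 0 < c₁ := by positivity
  set c₂ : ℝ := c₁ / (C ^ 2 + 1) with hc₂_def
  have hc₂ : 0 < c₂ := by positivity
  have hev1 : ∀ᶠ T : ℕ in atTop, M₁ / c₁ < (T : ℝ) :=
    tendsto_natCast_atTop_atTop.eventually_gt_atTop _
  have hev2 : ∀ᶠ T : ℕ in atTop, M₂ / c₂ < (T : ℝ) :=
    tendsto_natCast_atTop_atTop.eventually_gt_atTop _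
  filter_upwards [hM₁, hM₂, hev1, hev2, eventually_ge_atTop 1] with T hT1 hT2 hT3 hT4 hT5
  have hTpos : (0:ℝ) < (T:ℝ) := by exact_mod_cast hT5
  -- notation
  set A : Ωd → ℝ := fun ωd => ∑ t ∈ Finset.range T, eucNorm (z t ωd) ^ 4 with hA_def
  set X : Ωd → ℝ := fun ωd => ∑ t ∈ Finset.range T, ∑ s ∈ Finset.range T,
    if s ≠ t then eucNorm (z t ωd) ^ 2 * eucNorm (z s ωd) ^ 2 else 0 with hX_def
  have hXnonneg : ∀ ωd, 0 ≤ X ωd := by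
    intro ωd
    refine Finset.sum_nonneg fun t _ => Finset.sum_nonneg fun s _ => ?_
    by_cases h : s ≠ t
    · rw [if_pos h]; positivity
    · rw [if_neg h]
  -- set inclusion
  have hsub : {ωd | δ ≤ dist ((ν {ωb | e ≤ ⨆ γ : ℝ, frobNorm ((T : ℝ)⁻¹ • ∑ t ∈ Finset.range T,
        (if qv t ωd ≤ γ then η t ωb • vecMulVec (z t ωd) (z t ωd) else 0))}).toReal) 0} ⊆
      {ω | M₁ < (T : ℝ)⁻¹ * ∑ t ∈ Finset.range T, eucNorm (z t ω) ^ 4} ∪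
      {ω | M₂ * T < ∑ t ∈ Finset.range T, ∑ s ∈ Finset.range T,
          if s ≠ t then eucNorm (z t ω) ^ 2 * eucNorm (z s ω) ^ 2 else 0} := by
    intro ωd hωd
    simp only [Set.mem_setOf_eq] at hωd
    rw [Real.dist_eq, sub_zero, abs_of_nonneg ENNReal.toReal_nonneg] at hωd
    have hkey := key_bound ν η C hC (fun t => z t ωd) (fun t => qv t ωd) T hT5
      hmeas hint_sq hvar' hint_abs hprod e he
    have h1 : δ ≤ (A ωd + C ^ 2 * X ωd) / (e ^ 2 * (T : ℝ) ^ 2) := le_trans hωd hkey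
    have h2 : δ * (e ^ 2 * (T : ℝ) ^ 2) ≤ A ωd + C ^ 2 * X ωd :=
      (le_div_iff₀ (by positivity)).1 h1
    have h3 : c₁ * (T:ℝ) ^ 2 ≤ A ωd ∨ c₁ * (T:ℝ) ^ 2 ≤ C ^ 2 * X ωd := by
      by_contra h
      push_neg at h
      have : δ * (e ^ 2 * (T:ℝ) ^ 2) = c₁ * (T:ℝ)^2 + c₁ * (T:ℝ)^2 := by
        rw [hc₁_def]; ring
      linarith only [h.1, h.2, this, h2]
    rcases h3 with h3 | h3
    · left
      show M₁ < (T : ℝ)⁻¹ * ∑ t ∈ Finset.range T, eucNorm (z t ωd) ^ 4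
      have heq : (T:ℝ)⁻¹ * (c₁ * (T:ℝ)^2) = c₁ * (T:ℝ) := by
        field_simp
      have hA' : c₁ * (T:ℝ) ≤ (T:ℝ)⁻¹ * A ωd := by
        rw [← heq]
        exact mul_le_mul_of_nonneg_left h3 (inv_nonneg.2 hTpos.le)
      have hM : M₁ < c₁ * (T:ℝ) := by
        have h6 := (div_lt_iff₀ hc₁).1 hT3
        linarith only [h6]
      exact lt_of_lt_of_le hM hA'
    · right
      show M₂ * T < ∑ t ∈ Finset.range T, ∑ s ∈ Finset.range T,
        if s ≠ t then eucNorm (z t ωd) ^ 2 * eucNorm (z s ωd) ^ 2 else 0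
      have hX' : c₂ * (T:ℝ) ^ 2 ≤ X ωd := by
        have h4 : c₁ * (T:ℝ)^2 ≤ (C^2 + 1) * X ωd := by nlinarith only [hXnonneg ωd, h3]
        rw [hc₂_def, div_mul_eq_mul_div, div_le_iff₀ (by positivity)]
        linarith only [h4]
      have hM : M₂ * (T:ℝ) < c₂ * (T:ℝ)^2 := by
        have h5 : M₂ < c₂ * (T:ℝ) := by
          have h6 := (div_lt_iff₀ hc₂).1 hT4
          linarith only [h6]
        nlinarith only [hTpos, h5]
      exact lt_of_lt_of_le hM hX'
  -- measure bound
  calc μ {ωd | δ ≤ dist ((ν {ωb | e ≤ ⨆ γ : ℝ, frobNorm ((T : ℝ)⁻¹ • ∑ t ∈ Finset.range T,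
        (if qv t ωd ≤ γ then η t ωb • vecMulVec (z t ωd) (z t ωd) else 0))}).toReal) 0}
      ≤ μ ({ω | M₁ < (T : ℝ)⁻¹ * ∑ t ∈ Finset.range T, eucNorm (z t ω) ^ 4} ∪
        {ω | M₂ * T < ∑ t ∈ Finset.range T, ∑ s ∈ Finset.range T,
          if s ≠ t then eucNorm (z t ω) ^ 2 * eucNorm (z s ω) ^ 2 else 0}) := measure_mono hsub
    _ ≤ μ {ω | M₁ < (T : ℝ)⁻¹ * ∑ t ∈ Finset.range T, eucNorm (z t ω) ^ 4} +
        μ {ω | M₂ * T < ∑ t ∈ Finset.range T, ∑ s ∈ Finset.range T,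
          if s ≠ t then eucNorm (z t ω) ^ 2 * eucNorm (z s ω) ^ 2 else 0} := measure_union_le _ _
    _ ≤ ENNReal.ofReal (r / 2) + ENNReal.ofReal (r / 2) := by
        gcongr
        · exact ((ENNReal.lt_ofReal_iff_toReal_lt (measure_ne_top μ _)).2 hT1).le
        · exact ((ENNReal.lt_ofReal_iff_toReal_lt (measure_ne_top μ _)).2 hT2).le
    _ = ε' := by
        rw [← ENNReal.ofReal_add (by positivity) (by positivity)]
        rw [show r / 2 + r / 2 = r from by ring]
        exact ENNReal.ofReal_toReal hε'top
end
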